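/- Boundary limits of the mean square error: if the fluctuation theorem p₀(w) = e^{w−Δf} p₁(w) holds on Ω and the variances Var₀(e^{−(w−Δf)}) and Var₁(e^{w−Δf}) are finite, then M(α) = (1/(α(1−α)))(1/U(α) − 1) satisfies lim_{α→1⁻} M(α) = Var₀(e^{−(w−Δf)}) and lim_{α→0⁺} M(α) = Var₁(e^{w−Δf}); i.e., the asymptotic mean square error of the two-sided estimator converges to that of the one-sided forward and reverse estimators, respectively. -/

import Mathlib

open MeasureTheory Real Set Filter

/-- The overlap integral `U(α) = ∫_Ω p₀ p₁ / (α p₀ + (1-α) p₁)`. -/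
noncomputable def overlap (Ω : Set ℝ) (p₀ p₁ : ℝ → ℝ) (α : ℝ) : ℝ :=
  ∫ w in Ω, p₀ w * p₁ w / (α * p₀ w + (1 - α) * p₁ w)

/-- The rescaled asymptotic mean square error `M(α) = (1/(α(1-α)))(1/U(α) - 1)`. -/
noncomputable def mseM (Ω : Set ℝ) (p₀ p₁ : ℝ → ℝ) (α : ℝ) : ℝ :=
  (1 / (α * (1 - α))) * (1 / overlap Ω p₀ p₁ α - 1)

/-- The mean `⟨g⟩_q = ∫_Ω g q` of `g` with respect to the density `q` on `Ω`. -/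
noncomputable def wMean (Ω : Set ℝ) (q g : ℝ → ℝ) : ℝ :=
  ∫ w in Ω, g w * q w

/-- The variance `Var_q(g) = ⟨(g - ⟨g⟩_q)²⟩_q` of `g` with respect to the density `q`
on `Ω`. -/
noncomputable def wVar (Ω : Set ℝ) (q g : ℝ → ℝ) : ℝ :=
  ∫ w in Ω, (g w - wMean Ω q g) ^ 2 * q w

lemma dct_one (Ω : Set ℝ) (g s : ℝ → ℝ)
    (hgm : Measurable g) (hsm : Measurable s) (hspos : ∀ w, 0 < s w)
    (hg : IntegrableOn g Ω) :
    Tendsto (fun α => ∫ w in Ω, g w / (α + (1 - α) * s w))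
      (nhdsWithin 1 (Ioo (0:ℝ) 1)) (nhds (∫ w in Ω, g w)) := by
  apply tendsto_integral_filter_of_dominated_convergence (fun w => 2 * |g w|)
  · exact Eventually.of_forall fun α =>
      (hgm.div (measurable_const.add (measurable_const.mul hsm))).aestronglyMeasurable
  · have h2 : ∀ᶠ α : ℝ in nhdsWithin 1 (Ioo (0:ℝ) 1), 1/2 < α :=
      eventually_nhdsWithin_of_eventually_nhds (eventually_gt_nhds (by norm_num))
    filter_upwards [self_mem_nhdsWithin, h2] with α hα hhalf
    refine Eventually.of_forall fun w => ?_
    have hs := hspos w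
    have hβs : 0 ≤ (1 - α) * s w := mul_nonneg (by linarith [hα.2]) hs.le
    have hden0 : 0 < α + (1 - α) * s w := by linarith [hα.1]
    rw [norm_div, Real.norm_eq_abs, Real.norm_eq_abs, abs_of_pos hden0, div_le_iff₀ hden0]
    nlinarith [abs_nonneg (g w)]
  · exact hg.norm.const_mul 2
  · refine Eventually.of_forall fun w => ?_
    have hden : Tendsto (fun α : ℝ => α + (1 - α) * s w)
        (nhdsWithin 1 (Ioo (0:ℝ) 1)) (nhds 1) := by
      have hc : Continuous (fun α : ℝ => α + (1 - α) * s w) := by continuity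
      have := (hc.tendsto 1).mono_left (nhdsWithin_le_nhds (s := Ioo (0:ℝ) 1))
      simpa using this
    have h := (tendsto_const_nhds (x := g w)).div hden one_ne_zero
    rw [div_one] at h
    exact h

lemma dct_zero (Ω : Set ℝ) (g s : ℝ → ℝ)
    (hgm : Measurable g) (hsm : Measurable s) (hspos : ∀ w, 0 < s w)
    (hg : IntegrableOn (fun w => g w / s w) Ω) :
    Tendsto (fun α => ∫ w in Ω, g w / (α + (1 - α) * s w))
      (nhdsWithin 0 (Ioo (0:ℝ) 1)) (nhds (∫ w in Ω, g w / s w)) := by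
  apply tendsto_integral_filter_of_dominated_convergence (fun w => 2 * |g w / s w|)
  · exact Eventually.of_forall fun α =>
      (hgm.div (measurable_const.add (measurable_const.mul hsm))).aestronglyMeasurable
  · have h2 : ∀ᶠ α : ℝ in nhdsWithin 0 (Ioo (0:ℝ) 1), α < 1/2 :=
      eventually_nhdsWithin_of_eventually_nhds (eventually_lt_nhds (by norm_num))
    filter_upwards [self_mem_nhdsWithin, h2] with α hα hhalf
    refine Eventually.of_forall fun w => ?_
    have hs := hspos w
    have hβs : s w / 2 ≤ (1 - α) * s w := by nlinarith
    have hden0 : 0 < α + (1 - α) * s w := by linarith [hα.1]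
    rw [norm_div, Real.norm_eq_abs, Real.norm_eq_abs, abs_of_pos hden0, abs_div,
      abs_of_pos hs, div_le_iff₀ hden0]
    rw [show 2 * (|g w| / s w) * (α + (1 - α) * s w)
        = 2 * |g w| * (α + (1 - α) * s w) / s w by ring, le_div_iff₀ hs]
    nlinarith [abs_nonneg (g w), hα.1]
  · exact hg.norm.const_mul 2
  · refine Eventually.of_forall fun w => ?_
    have hden : Tendsto (fun α : ℝ => α + (1 - α) * s w)
        (nhdsWithin 0 (Ioo (0:ℝ) 1)) (nhds (s w)) := by
      have hc : Continuous (fun α : ℝ => α + (1 - α) * s w) := by continuity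
      have := (hc.tendsto 0).mono_left (nhdsWithin_le_nhds (s := Ioo (0:ℝ) 1))
      simpa using this
    exact tendsto_const_nhds.div hden (hspos w).ne'

/-- Boundary limits of the mean square error: if the fluctuation theorem
`p₀ w = exp (w - Δf) * p₁ w` holds on `Ω` and the variances
`Var₀(e^{-(w-Δf)})` and `Var₁(e^{w-Δf})` are finite, then
`M(α) → Var₀(e^{-(w-Δf)})` as `α → 1⁻` and
`M(α) → Var₁(e^{w-Δf})` as `α → 0⁺`. -/
theorem mse_boundary_limits
    (p₀ p₁ : ℝ → ℝ) (Ω : Set ℝ) (Δf : ℝ)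
    (hm0 : Measurable p₀) (hm1 : Measurable p₁)
    (hpos0 : ∀ w, 0 ≤ p₀ w) (hpos1 : ∀ w, 0 ≤ p₁ w)
    (hnorm0 : ∫ w, p₀ w = 1) (hnorm1 : ∫ w, p₁ w = 1)
    (hΩ0 : Ω = {w | 0 < p₀ w}) (hΩ1 : Ω = {w | 0 < p₁ w})
    (hft : ∀ w ∈ Ω, p₀ w = Real.exp (w - Δf) * p₁ w)
    (hm0' : IntegrableOn (fun w => Real.exp (-(w - Δf)) * p₀ w) Ω)
    (hv0 : IntegrableOn (fun w =>
      (Real.exp (-(w - Δf)) - wMean Ω p₀ (fun v => Real.exp (-(v - Δf)))) ^ 2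
        * p₀ w) Ω)
    (hm1' : IntegrableOn (fun w => Real.exp (w - Δf) * p₁ w) Ω)
    (hv1 : IntegrableOn (fun w =>
      (Real.exp (w - Δf) - wMean Ω p₁ (fun v => Real.exp (v - Δf))) ^ 2
        * p₁ w) Ω) :
    Tendsto (mseM Ω p₀ p₁) (nhdsWithin 1 (Ioo (0:ℝ) 1))
      (nhds (wVar Ω p₀ (fun w => Real.exp (-(w - Δf))))) ∧
    Tendsto (mseM Ω p₀ p₁) (nhdsWithin 0 (Ioo (0:ℝ) 1))
      (nhds (wVar Ω p₁ (fun w => Real.exp (w - Δf)))) := by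
  set s : ℝ → ℝ := fun w => Real.exp (-(w - Δf)) with hs_def
  have hsm : Measurable s := (measurable_id.sub_const Δf).neg.exp
  have hspos : ∀ w, 0 < s w := fun w => Real.exp_pos _
  have hΩmeas : MeasurableSet Ω := by
    rw [hΩ0]; exact measurableSet_lt measurable_const hm0
  -- global integrability
  have hint0 : Integrable p₀ := by
    by_contra h; rw [integral_undef h] at hnorm0; norm_num at hnorm0
  have hint1 : Integrable p₁ := by
    by_contra h; rw [integral_undef h] at hnorm1; norm_num at hnorm1
  -- densities vanish off Ω
  have hzero0 : ∀ w ∉ Ω, p₀ w = 0 := by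
    intro w hw; rw [hΩ0] at hw; simp only [mem_setOf_eq, not_lt] at hw
    exact le_antisymm hw (hpos0 w)
  have hzero1 : ∀ w ∉ Ω, p₁ w = 0 := by
    intro w hw; rw [hΩ1] at hw; simp only [mem_setOf_eq, not_lt] at hw
    exact le_antisymm hw (hpos1 w)
  have hI0 : ∫ w in Ω, p₀ w = 1 := by
    rw [setIntegral_eq_integral_of_forall_compl_eq_zero hzero0]; exact hnorm0
  have hI1 : ∫ w in Ω, p₁ w = 1 := by
    rw [setIntegral_eq_integral_of_forall_compl_eq_zero hzero1]; exact hnorm1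
  -- fluctuation theorem in terms of s
  have hp1Ω : ∀ w ∈ Ω, p₁ w = s w * p₀ w := by
    intro w hw
    rw [hft w hw, hs_def]
    rw [← mul_assoc, ← Real.exp_add]
    simp
  -- means
  have mean0 : wMean Ω p₀ s = 1 := by
    rw [wMean, ← hI1]
    refine setIntegral_congr_fun hΩmeas fun w hw => ?_
    rw [hp1Ω w hw]
  have mean1 : wMean Ω p₁ (fun v => Real.exp (v - Δf)) = 1 := by
    rw [wMean, ← hI0]
    refine setIntegral_congr_fun hΩmeas fun w hw => ?_
    rw [hft w hw]
  -- integrand abbreviations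
  set G : ℝ → ℝ := fun w => (s w - 1) ^ 2 * p₀ w with hG_def
  have hGm : Measurable G := ((hsm.sub measurable_const).pow_const 2).mul hm0
  have hGnn : ∀ w, 0 ≤ G w := fun w => mul_nonneg (sq_nonneg _) (hpos0 w)
  have hGint : IntegrableOn G Ω := by rw [mean0] at hv0; exact hv0
  have hGsint : IntegrableOn (fun w => G w / s w) Ω := by
    rw [mean1] at hv1
    refine hv1.congr_fun (fun w hw => ?_) hΩmeas
    beta_reduce
    rw [hp1Ω w hw, hG_def]
    have hsw := (hspos w).ne'
    have ht : Real.exp (w - Δf) = 1 / s w := by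
      rw [hs_def]; rw [eq_div_iff hsw, ← Real.exp_add]; simp
    rw [ht]; field_simp; ring
  -- numerator of U
  set g : ℝ → ℝ := fun w => p₀ w * s w with hg_def
  have hgm : Measurable g := hm0.mul hsm
  have hgint : IntegrableOn g Ω := by
    refine (hint1.integrableOn).congr_fun (fun w hw => ?_) hΩmeas
    rw [hp1Ω w hw, hg_def]; ring
  have hgI : ∫ w in Ω, g w = 1 := by
    rw [← hI1]
    refine setIntegral_congr_fun hΩmeas fun w hw => ?_
    rw [hp1Ω w hw, hg_def]; ring
  have hgsint : IntegrableOn (fun w => g w / s w) Ω := by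
    refine (hint0.integrableOn).congr_fun (fun w _ => ?_) hΩmeas
    rw [hg_def]
    exact (mul_div_cancel_right₀ _ (hspos w).ne').symm
  have hgsI : ∫ w in Ω, g w / s w = 1 := by
    rw [← hI0]
    refine setIntegral_congr_fun hΩmeas fun w _ => ?_
    rw [hg_def]; exact mul_div_cancel_right₀ _ (hspos w).ne'
  -- overlap rewritten
  have hoverlap : ∀ α ∈ Ioo (0:ℝ) 1,
      overlap Ω p₀ p₁ α = ∫ w in Ω, g w / (α + (1 - α) * s w) := by
    intro α hα
    refine setIntegral_congr_fun hΩmeas fun w hw => ?_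
    have hp0 : 0 < p₀ w := by rw [hΩ0] at hw; exact hw
    have hden : 0 < α + (1 - α) * s w := by
      have := hspos w
      have : 0 ≤ (1 - α) * s w := mul_nonneg (by linarith [hα.2]) this.le
      linarith [hα.1]
    rw [hp1Ω w hw, hg_def,
      show α * p₀ w + (1 - α) * (s w * p₀ w) = (α + (1 - α) * s w) * p₀ w by ring,
      div_eq_div_iff (mul_ne_zero hden.ne' hp0.ne') hden.ne']
    ring
  -- the key identity: 1 - U = α(1-α) V
  have hVint : ∀ α ∈ Ioo (0:ℝ) 1, IntegrableOn (fun w => G w / (α + (1 - α) * s w)) Ω := by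
    intro α hα
    refine Integrable.mono (hGint.const_mul (1/α))
      ((hGm.div (measurable_const.add (measurable_const.mul hsm))).aestronglyMeasurable) ?_
    refine Eventually.of_forall fun w => ?_
    have hs := hspos w
    have hβs : 0 ≤ (1 - α) * s w := mul_nonneg (by linarith [hα.2]) hs.le
    have hden : 0 < α + (1 - α) * s w := by linarith [hα.1]
    rw [norm_div, Real.norm_eq_abs, Real.norm_eq_abs, Real.norm_eq_abs,
      abs_of_pos hden, abs_of_nonneg (hGnn w), abs_of_nonneg
        (mul_nonneg (one_div_nonneg.mpr hα.1.le) (hGnn w)), div_le_iff₀ hden]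
    rw [show 1/α * G w * (α + (1 - α) * s w) = G w * ((α + (1 - α) * s w)/α) by ring]
    have h1 : (1:ℝ) ≤ (α + (1 - α) * s w) / α := (one_le_div hα.1).mpr (by linarith)
    nlinarith [mul_nonneg (hGnn w) (sub_nonneg.mpr h1)]
  have hUint : ∀ α ∈ Ioo (0:ℝ) 1, IntegrableOn (fun w => g w / (α + (1 - α) * s w)) Ω := by
    intro α hα
    refine Integrable.mono (hgint.const_mul (1/α))
      ((hgm.div (measurable_const.add (measurable_const.mul hsm))).aestronglyMeasurable) ?_
    refine Eventually.of_forall fun w => ?_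
    have hs := hspos w
    have hgnn : 0 ≤ g w := mul_nonneg (hpos0 w) hs.le
    have hβs : 0 ≤ (1 - α) * s w := mul_nonneg (by linarith [hα.2]) hs.le
    have hden : 0 < α + (1 - α) * s w := by linarith [hα.1]
    rw [norm_div, Real.norm_eq_abs, Real.norm_eq_abs, Real.norm_eq_abs,
      abs_of_pos hden, abs_of_nonneg hgnn, abs_of_nonneg
        (mul_nonneg (one_div_nonneg.mpr hα.1.le) hgnn), div_le_iff₀ hden]
    rw [show 1/α * g w * (α + (1 - α) * s w) = g w * ((α + (1 - α) * s w)/α) by ring]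
    have h1 : (1:ℝ) ≤ (α + (1 - α) * s w) / α := (one_le_div hα.1).mpr (by linarith)
    nlinarith [mul_nonneg hgnn (sub_nonneg.mpr h1)]
  have hkey : ∀ α ∈ Ioo (0:ℝ) 1,
      1 - overlap Ω p₀ p₁ α
        = α * (1 - α) * ∫ w in Ω, G w / (α + (1 - α) * s w) := by
    intro α hα
    rw [hoverlap α hα]
    have step1 : (∫ w in Ω, p₀ w) - (∫ w in Ω, g w / (α + (1 - α) * s w))
        = ∫ w in Ω, (p₀ w - g w / (α + (1 - α) * s w)) :=
      (integral_sub hint0.integrableOn (hUint α hα)).symm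
    have step2 : ∀ w, p₀ w - g w / (α + (1 - α) * s w)
        = α * (1 - α) * (G w / (α + (1 - α) * s w)) + α * (p₀ w - g w) := by
      intro w
      have hs := hspos w
      have hβs : 0 ≤ (1 - α) * s w := mul_nonneg (by linarith [hα.2]) hs.le
      have hden : (0:ℝ) < α + (1 - α) * s w := by linarith [hα.1]
      have hinv : (α + (1 - α) * s w) * (α + (1 - α) * s w)⁻¹ = 1 := mul_inv_cancel₀ hden.ne'
      rw [hg_def, hG_def]
      beta_reduce
      linear_combination (-(p₀ w * (1 - α * (1 - s w)))) * hinv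
    calc 1 - ∫ w in Ω, g w / (α + (1 - α) * s w)
        = (∫ w in Ω, p₀ w) - ∫ w in Ω, g w / (α + (1 - α) * s w) := by rw [hI0]
      _ = ∫ w in Ω, (p₀ w - g w / (α + (1 - α) * s w)) := step1
      _ = ∫ w in Ω, (α * (1 - α) * (G w / (α + (1 - α) * s w)) + α * (p₀ w - g w)) :=
            setIntegral_congr_fun hΩmeas (fun w _ => step2 w)
      _ = α * (1 - α) * (∫ w in Ω, G w / (α + (1 - α) * s w))
            + α * ((∫ w in Ω, p₀ w) - ∫ w in Ω, g w) := by
            have hA : IntegrableOn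
                (fun w => α * (1 - α) * (G w / (α + (1 - α) * s w))) Ω :=
              (hVint α hα).const_mul _
            have hB : IntegrableOn (fun w => α * (p₀ w - g w)) Ω := by
              exact (hint0.integrableOn.sub hgint).const_mul α
            rw [integral_add hA hB, integral_const_mul, integral_const_mul,
              integral_sub hint0.integrableOn hgint]
      _ = α * (1 - α) * ∫ w in Ω, G w / (α + (1 - α) * s w) := by
            rw [hI0, hgI]; ring
  -- limits of U and V
  have hU1 : Tendsto (overlap Ω p₀ p₁) (nhdsWithin 1 (Ioo (0:ℝ) 1)) (nhds 1) := by
    have := dct_one Ω g s hgm hsm hspos hgint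
    rw [hgI] at this
    exact this.congr' (by filter_upwards [self_mem_nhdsWithin] with α hα
      using (hoverlap α hα).symm)
  have hU0 : Tendsto (overlap Ω p₀ p₁) (nhdsWithin 0 (Ioo (0:ℝ) 1)) (nhds 1) := by
    have := dct_zero Ω g s hgm hsm hspos hgsint
    rw [hgsI] at this
    exact this.congr' (by filter_upwards [self_mem_nhdsWithin] with α hα
      using (hoverlap α hα).symm)
  have hV1 : Tendsto (fun α => ∫ w in Ω, G w / (α + (1 - α) * s w))
      (nhdsWithin 1 (Ioo (0:ℝ) 1)) (nhds (∫ w in Ω, G w)) :=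
    dct_one Ω G s hGm hsm hspos hGint
  have hV0 : Tendsto (fun α => ∫ w in Ω, G w / (α + (1 - α) * s w))
      (nhdsWithin 0 (Ioo (0:ℝ) 1)) (nhds (∫ w in Ω, G w / s w)) :=
    dct_zero Ω G s hGm hsm hspos hGsint
  -- variance identifications
  have var0 : wVar Ω p₀ s = ∫ w in Ω, G w := by
    rw [wVar, mean0]
  have var1 : wVar Ω p₁ (fun v => Real.exp (v - Δf)) = ∫ w in Ω, G w / s w := by
    rw [wVar, mean1]
    refine setIntegral_congr_fun hΩmeas fun w hw => ?_
    rw [hp1Ω w hw, hG_def]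
    have hsw := (hspos w).ne'
    have ht : Real.exp (w - Δf) = 1 / s w := by
      rw [hs_def]; rw [eq_div_iff hsw, ← Real.exp_add]; simp
    rw [ht]; field_simp; ring
  -- eventual equality mseM = V / U, generic over the two filters
  have hevent : ∀ l : Filter ℝ, Tendsto (overlap Ω p₀ p₁) l (nhds 1) →
      Ioo (0:ℝ) 1 ∈ l →
      mseM Ω p₀ p₁ =ᶠ[l] fun α => (∫ w in Ω, G w / (α + (1 - α) * s w)) / overlap Ω p₀ p₁ α := by
    intro l hUl hIoo
    have hne : ∀ᶠ α in l, overlap Ω p₀ p₁ α ≠ 0 := hUl.eventually_ne one_ne_zero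
    filter_upwards [hIoo, hne] with α hα hU0'
    have hid := hkey α hα
    have ha : α ≠ 0 := ne_of_gt hα.1
    have hb : (1:ℝ) - α ≠ 0 := by have := hα.2; intro h; linarith
    have e1 : 1 / overlap Ω p₀ p₁ α - 1
        = (1 - overlap Ω p₀ p₁ α) / overlap Ω p₀ p₁ α := by
      field_simp
    rw [mseM, e1, hid]
    field_simp
  constructor
  · have hev := hevent _ hU1 self_mem_nhdsWithin
    rw [var0]
    exact Tendsto.congr' hev.symm (by have h := hV1.div hU1 one_ne_zero; rw [div_one] at h; exact h)
  · have hev := hevent _ hU0 self_mem_nhdsWithin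
    rw [var1]
    exact Tendsto.congr' hev.symm (by have h := hV0.div hU0 one_ne_zero; rw [div_one] at h; exact h)
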